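/- If D is a minimal counterexample, then D has a directed Hamilton cycle C such that each vertex of D monochromatically dominates every vertex of D other than itself and its predecessor on C, and no vertex monochromatically dominates its predecessor on C; moreover, C is the unique Hamilton cycle of D (up to rotation) with this property. -/

import Mathlib

/-- A 3-coloured tournament on vertex type `V`: between any two distinct
vertices there is exactly one directed edge (`beats`), and `colour x y` gives
the colour (one of three: red, blue, green) of the edge from `x` to `y`
(meaningful when `beats x y` holds). -/
structure CTournament (V : Type*) where
  beats : V → V → Prop
  irrefl : ∀ v, ¬ beats v v
  asymm : ∀ v w, beats v w → ¬ beats w v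
  total : ∀ v w, v ≠ w → beats v w ∨ beats w v
  colour : V → V → Fin 3

namespace CTournament

/-- The colour red. -/
def red : Fin 3 := 0
/-- The colour blue. -/
def blue : Fin 3 := 1
/-- The colour green. -/
def green : Fin 3 := 2

variable {V : Type*} (T : CTournament V)

/-- `x` monochromatically dominates `y` in colour `c`: there is a directed
path (with at least one edge) from `x` to `y` all of whose edges have
colour `c`. -/
def Dom (c : Fin 3) (x y : V) : Prop :=
  Relation.TransGen (fun a b => T.beats a b ∧ T.colour a b = c) x y

/-- `x` monochromatically dominates `y` (in some colour). -/
def MDom (x y : V) : Prop := ∃ c, T.Dom c x y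

/-- `x` monochromatically dominates `y` in colour `c` within the
subtournament induced on the vertex set `S`. -/
def DomIn (S : Set V) (c : Fin 3) (x y : V) : Prop :=
  Relation.TransGen (fun a b => a ∈ S ∧ b ∈ S ∧ T.beats a b ∧ T.colour a b = c) x y

/-- `x` monochromatically dominates `y` within the subtournament induced on `S`. -/
def MDomIn (S : Set V) (x y : V) : Prop := ∃ c, T.DomIn S c x y

/-- `T` contains a `T_3`: three vertices spanning a cyclic triangle whose
three edges have three pairwise distinct colours. -/
def HasT3 : Prop :=
  ∃ a b c : V, T.beats a b ∧ T.beats b c ∧ T.beats c a ∧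
    T.colour a b ≠ T.colour b c ∧ T.colour b c ≠ T.colour c a ∧
    T.colour a b ≠ T.colour c a

/-- Vertex `v` is incident with an edge of colour `c`. -/
def IncidentColour (v : V) (c : Fin 3) : Prop :=
  ∃ w, (T.beats v w ∧ T.colour v w = c) ∨ (T.beats w v ∧ T.colour w v = c)

/-- `T` is a minimal counterexample: it contains no `T_3`, no vertex
monochromatically dominates every other vertex, and every proper nonempty
subset of the vertices spans a subtournament containing a vertex that
monochromatically dominates (within that subtournament) every other vertex
of the subset. -/
def MinimalCex : Prop :=
  ¬ T.HasT3 ∧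
  (¬ ∃ x : V, ∀ y, y ≠ x → T.MDom x y) ∧
  ∀ S : Set V, S.Nonempty → S ≠ Set.univ →
    ∃ x ∈ S, ∀ y ∈ S, y ≠ x → T.MDomIn S x y

/-- The permutation `σ` (sending every vertex to its successor) is a directed
Hamilton cycle of `T`: every vertex beats its successor, and all vertices lie
on a single cycle of `σ`. -/
def IsHamCycle (σ : Equiv.Perm V) : Prop :=
  (∀ v, T.beats v (σ v)) ∧ ∀ v w : V, ∃ n : ℕ, (⇑σ)^[n] v = w

/-- The domination property of the Hamilton cycle `σ`: every vertex
monochromatically dominates every vertex other than itself and its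
predecessor on the cycle, and no vertex monochromatically dominates its
predecessor. -/
def HamDomProp (σ : Equiv.Perm V) : Prop :=
  (∀ x y : V, y ≠ x → y ≠ σ.symm x → T.MDom x y) ∧
  ∀ x : V, ¬ T.MDom x (σ.symm x)

/-- The vertex set of the directed subpath `xCy` of the Hamilton cycle whose
successor permutation is `σ`: all vertices reachable from `x` along the cycle
no later than the first visit of `y`. -/
def PathSet (σ : Equiv.Perm V) (x y : V) : Set V :=
  {z | ∃ k : ℕ, (⇑σ)^[k] x = z ∧ ∀ j < k, (⇑σ)^[j] x ≠ y}

/-- `R^+(x)`: the vertices to which `x` sends a red edge. -/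
def Rplus (x : V) : Set V := {v | T.beats x v ∧ T.colour x v = red}
/-- `R^-(x)`: the vertices from which `x` receives a red edge. -/
def Rminus (x : V) : Set V := {v | T.beats v x ∧ T.colour v x = red}
/-- `B^+(x)`: the vertices to which `x` sends a blue edge. -/
def Bplus (x : V) : Set V := {v | T.beats x v ∧ T.colour x v = blue}
/-- `B^-(x)`: the vertices from which `x` receives a blue edge. -/
def Bminus (x : V) : Set V := {v | T.beats v x ∧ T.colour v x = blue}
/-- `R_r^+(x) = {v ∈ R^+(x) : v monochromatically dominates x in red}`. -/
def Rrplus (x : V) : Set V := {v ∈ T.Rplus x | T.Dom red v x}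
/-- `R_r^-(x) = {v ∈ R^-(x) : x monochromatically dominates v in red}`. -/
def Rrminus (x : V) : Set V := {v ∈ T.Rminus x | T.Dom red x v}
/-- `B_b^+(x) = {v ∈ B^+(x) : v monochromatically dominates x in blue}`. -/
def Bbplus (x : V) : Set V := {v ∈ T.Bplus x | T.Dom blue v x}
/-- `B_b^-(x) = {v ∈ B^-(x) : x monochromatically dominates v in blue}`. -/
def Bbminus (x : V) : Set V := {v ∈ T.Bminus x | T.Dom blue x v}

end CTournament

section Aux

namespace CTournament

variable {V : Type*} {T : CTournament V}

lemma mdomIn_mdom {S : Set V} {x y : V} (hd : T.MDomIn S x y) : T.MDom x y := by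
  obtain ⟨c, hc⟩ := hd
  exact ⟨c, Relation.TransGen.mono (fun a b hab => ⟨hab.2.2.1, hab.2.2.2⟩) _ _ hc⟩

/-- `x` is a "king-type" vertex with unique non-dominated vertex `y`. -/
def KT (T : CTournament V) (x y : V) : Prop :=
  y ≠ x ∧ ¬ T.MDom x y ∧ ∀ z, z ≠ x → z ≠ y → T.MDom x z

lemma nd_ex (h : T.MinimalCex) (x : V) : ∃ y, y ≠ x ∧ ¬ T.MDom x y := by
  have h2 := h.2.1
  push_neg at h2
  exact h2 x

lemma king_step (h : T.MinimalCex) (u : V) : ∃ k, KT T k u := by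
  obtain ⟨y, hy, -⟩ := nd_ex h u
  have hS : ({u}ᶜ : Set V).Nonempty := ⟨y, hy⟩
  have hSne : ({u}ᶜ : Set V) ≠ Set.univ := by
    intro hEq
    have : u ∈ ({u}ᶜ : Set V) := hEq ▸ Set.mem_univ u
    exact this rfl
  obtain ⟨k, hk, hdom⟩ := h.2.2 _ hS hSne
  have hku : k ≠ u := hk
  refine ⟨k, Ne.symm hku, ?_, ?_⟩
  · intro hmd
    apply h.2.1
    refine ⟨k, fun z hzk => ?_⟩
    by_cases hzu : z = u
    · exact hzu ▸ hmd
    · exact mdomIn_mdom (hdom z hzu hzk)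
  · intro z hzk hzu
    exact mdomIn_mdom (hdom z hzu hzk)

lemma kt_unique {x y y' : V} (h1 : KT T x y) (h2 : KT T x y') : y = y' := by
  by_contra hne
  exact h2.2.1 (h1.2.2 y' h2.1 (fun e => hne e.symm))

lemma all_kt [Finite V] (h : T.MinimalCex) (v : V) : ∃ y, KT T v y := by
  classical
  choose g hg using king_step h
  set u : ℕ → V := fun n => g^[n] v with hu
  have hu0 : u 0 = v := rfl
  have step : ∀ n, KT T (u (n + 1)) (u n) := by
    intro n
    have : u (n + 1) = g (u n) := by
      simp [hu, Function.iterate_succ_apply']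
    rw [this]
    exact hg (u n)
  have key : ∀ a b, a < b → u a = u b → ∃ j, 1 ≤ j ∧ u j = u 0 := by
    intro a
    induction a with
    | zero => exact fun b hb he => ⟨b, hb, he.symm⟩
    | succ a ih =>
      intro b hb he
      obtain ⟨b', rfl⟩ : ∃ b', b = b' + 1 := ⟨b - 1, by omega⟩
      have h1 : KT T (u (b' + 1)) (u a) := he ▸ step a
      have h2 : u a = u b' := kt_unique h1 (step b')
      exact ih b' (by omega) h2
  obtain ⟨a, b, hab, he⟩ := Finite.exists_ne_map_eq_of_infinite u
  have ⟨j, hj1, hjv⟩ : ∃ j, 1 ≤ j ∧ u j = u 0 := by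
    rcases lt_or_gt_of_ne hab with hlt | hgt
    · exact key a b hlt he
    · exact key b a hgt he.symm
  obtain ⟨j', rfl⟩ : ∃ j', j = j' + 1 := ⟨j - 1, by omega⟩
  refine ⟨u j', ?_⟩
  have := step j'
  rw [hjv, hu0] at this
  exact this

end CTournament

end Aux

/-- A minimal counterexample has a directed Hamilton cycle such
that each vertex monochromatically dominates every vertex other than itself and
its predecessor, no vertex monochromatically dominates its predecessor, and this
Hamilton cycle is unique (up to rotation, which is quotiented out by the
successor-permutation encoding). -/
theorem minimalCex_hamilton_unique {V : Type*} [Fintype V] (T : CTournament V)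
    (h : T.MinimalCex) :
    ∃ σ : Equiv.Perm V, T.IsHamCycle σ ∧ T.HamDomProp σ ∧
      ∀ σ' : Equiv.Perm V, T.IsHamCycle σ' → T.HamDomProp σ' → σ' = σ := by
  classical
  choose p hp using fun v => CTournament.all_kt h v
  -- hp v : KT T v (p v)
  have psurj : Function.Surjective p := by
    intro v
    obtain ⟨k, hk⟩ := CTournament.king_step h v
    exact ⟨k, CTournament.kt_unique (hp k) hk⟩
  have pbij : Function.Bijective p := Finite.surjective_iff_bijective.mp psurj
  let e : Equiv.Perm V := Equiv.ofBijective p pbij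
  have he_app : ∀ x, e x = p x := fun x => rfl
  have hesymm : ∀ x, (e.symm).symm x = p x := fun x => rfl
  have hne : ∀ x, p x ≠ x := fun x => (hp x).1
  have hnd : ∀ x, ¬ T.MDom x (p x) := fun x => (hp x).2.1
  have hdomall : ∀ x z, z ≠ x → z ≠ p x → T.MDom x z := fun x => (hp x).2.2
  have hbeats : ∀ v, T.beats v (e.symm v) := by
    intro v
    set w := e.symm v with hw
    have hpw : p w = v := e.apply_symm_apply v
    have hvw : v ≠ w := hpw ▸ hne w
    rcases T.total v w hvw with hb | hb
    · exact hb
    · exact absurd ⟨T.colour w v, Relation.TransGen.single ⟨hb, rfl⟩⟩ (hpw ▸ hnd w)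
  refine ⟨e.symm, ⟨hbeats, ?_⟩, ⟨?_, ?_⟩, ?_⟩
  · -- single cycle
    intro v w
    set f : V → V := ⇑e.symm with hf
    set O : Set V := Set.range (fun n => f^[n] v) with hO
    have hOv : v ∈ O := ⟨0, rfl⟩
    -- periodicity
    have hper : ∃ m, 1 ≤ m ∧ f^[m] v = v := by
      obtain ⟨a, b, hab, heq⟩ := Finite.exists_ne_map_eq_of_infinite (fun n => f^[n] v)
      have hcancel : ∀ a b, a < b → f^[a] v = f^[b] v → ∃ m, 1 ≤ m ∧ f^[m] v = v := by
        intro a b hlt heq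
        refine ⟨b - a, by omega, ?_⟩
        have hinj : Function.Injective (f^[a]) := Function.Injective.iterate e.symm.injective a
        apply hinj
        rw [← Function.iterate_add_apply]
        have : a + (b - a) = b := by omega
        rw [this]
        exact heq.symm
      rcases lt_or_gt_of_ne hab with hlt | hgt
      · exact hcancel a b hlt heq
      · exact hcancel b a hgt heq.symm
    -- O is closed under p (= e)
    have hE : ∀ n : ℕ, e (f^[n + 1] v) = f^[n] v := by
      intro n
      rw [Function.iterate_succ_apply']
      exact e.apply_symm_apply _
    have hpO : ∀ k ∈ O, p k ∈ O := by
      rintro k ⟨n, rfl⟩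
      simp only at *
      cases n with
      | zero =>
        obtain ⟨m, hm1, hmv⟩ := hper
        obtain ⟨m', rfl⟩ : ∃ m', m = m' + 1 := ⟨m - 1, by omega⟩
        refine ⟨m', ?_⟩
        show f^[m'] v = p (f^[0] v)
        have : p (f^[0] v) = e (f^[m' + 1] v) := by
          show p v = _
          rw [hmv]
          rfl
        rw [this, hE m']
      | succ n =>
        refine ⟨n, ?_⟩
        show f^[n] v = p (f^[n + 1] v)
        have : p (f^[n + 1] v) = e (f^[n + 1] v) := rfl
        rw [this, hE n]
    by_contra hw
    have hOne : O ≠ Set.univ := by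
      intro hEq
      have hwO : w ∈ O := hEq.symm ▸ Set.mem_univ w
      exact hw hwO
    obtain ⟨k, hkO, hkdom⟩ := h.2.2 O ⟨v, hOv⟩ hOne
    have hpkO : p k ∈ O := hpO k hkO
    exact hnd k (CTournament.mdomIn_mdom (hkdom (p k) hpkO (hne k)))
  · intro x y hyx hys
    exact hdomall x y hyx (by rw [← hesymm x]; exact hys)
  · intro x
    rw [hesymm x]
    exact hnd x
  · intro σ' hham' hdom'
    have hsymm : ∀ x, σ'.symm x = p x := by
      intro x
      have hne' : σ'.symm x ≠ x := by
        intro hx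
        have : σ' x = x := by
          conv_lhs => rw [← hx]
          exact σ'.apply_symm_apply x
        have hb := hham'.1 x
        rw [this] at hb
        exact T.irrefl x hb
      exact (CTournament.kt_unique (hp x) ⟨hne', hdom'.2 x, fun z hz1 hz2 => hdom'.1 x z hz1 hz2⟩).symm
    have hse : σ'.symm = e := Equiv.ext (fun x => hsymm x)
    rw [← Equiv.symm_symm σ', hse]
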